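/- Let E be a real locally convex space that is a Baire space. Then E is Asplund if and only if every continuous convex function f : E → ℝ (defined on all of E) is Fréchet differentiable at every point of some dense Gδ subset of E. -/

import Mathlib

open Filter Topology Bornology TopologicalSpace Set Pointwise

section Definitions

variable {E : Type*} [AddCommGroup E] [Module ℝ E] [TopologicalSpace E]

/-- A function `f` (thought of as a convex function on an open convex set containing `x₀`)
is Gâteaux differentiable at `x₀` if there is a continuous linear functional `L` such that
for every direction `x` and every `ε > 0` there is `δ > 0` with
`|(f (x₀ + t • x) - f x₀) / t - L x| < ε` whenever `0 < |t| < δ`. -/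
def GateauxDiffAt (f : E → ℝ) (x₀ : E) : Prop :=
  ∃ L : E →L[ℝ] ℝ, ∀ x : E, ∀ ε : ℝ, 0 < ε → ∃ δ : ℝ, 0 < δ ∧ ∀ t : ℝ,
    0 < |t| → |t| < δ → |(f (x₀ + t • x) - f x₀) / t - L x| < ε

/-- A function `f` is Fréchet differentiable at `x₀` if there is a continuous linear
functional `L` such that for every (von Neumann) bounded set `B` and every `ε > 0` there is
`δ > 0` with `|(f (x₀ + t • x) - f x₀) / t - L x| < ε` for all `x ∈ B`, whenever
`0 < |t| < δ`. -/
def FrechetDiffAt (f : E → ℝ) (x₀ : E) : Prop :=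
  ∃ L : E →L[ℝ] ℝ, ∀ B : Set E, IsVonNBounded ℝ B → ∀ ε : ℝ, 0 < ε →
    ∃ δ : ℝ, 0 < δ ∧ ∀ t : ℝ, 0 < |t| → |t| < δ →
      ∀ x ∈ B, |(f (x₀ + t • x) - f x₀) / t - L x| < ε

end Definitions

/-- `E` is Asplund: every continuous convex function on a nonempty open convex set `D`
is Fréchet differentiable at every point of a set which is a dense `Gδ` subset of `D`. -/
def IsAsplund (E : Type*) [AddCommGroup E] [Module ℝ E] [TopologicalSpace E] : Prop :=
  ∀ (D : Set E) (f : E → ℝ), D.Nonempty → IsOpen D → Convex ℝ D →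
    ContinuousOn f D → ConvexOn ℝ D f →
    ∃ G : Set E, G ⊆ D ∧ IsGδ (Subtype.val ⁻¹' G : Set D) ∧
      Dense (Subtype.val ⁻¹' G : Set D) ∧ ∀ x ∈ G, FrechetDiffAt f x

section BanachCategory

variable {X : Type*} [TopologicalSpace X]

variable {X : Type*} [TopologicalSpace X]

lemma isNowhereDense_mono {s t : Set X} (hst : s ⊆ t) (ht : IsNowhereDense t) :
    IsNowhereDense s :=
  eq_empty_of_subset_empty <| ht ▸ interior_mono (closure_mono hst)

lemma nwd_closure_diff {W : Set X} (hW : IsOpen W) : IsNowhereDense (closure W \ W) := by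
  rw [IsNowhereDense, eq_empty_iff_forall_notMem]
  intro x hx
  set O := interior (closure (closure W \ W)) with hO
  have hOcl : O ⊆ closure W := by
    refine subset_trans interior_subset ?_
    have h1 : closure (closure W \ W) ⊆ closure (closure W) := closure_mono diff_subset
    rwa [closure_closure] at h1
  obtain ⟨u, huO, huW⟩ : (O ∩ W).Nonempty :=
    mem_closure_iff.1 (hOcl hx) _ isOpen_interior hx
  have hu' : u ∈ closure (closure W \ W) := interior_subset huO
  obtain ⟨v, ⟨hvO, hvW⟩, hvd⟩ : ((O ∩ W) ∩ (closure W \ W)).Nonempty :=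
    mem_closure_iff.1 hu' _ (isOpen_interior.inter hW) ⟨huO, huW⟩
  exact hvd.2 hvW

theorem banach_category {M : Set X}
    (h : ∀ x ∈ M, ∃ V : Set X, IsOpen V ∧ x ∈ V ∧ IsMeagre (M ∩ V)) : IsMeagre M := by
  classical
  -- the collection of "good" families
  set P : Set (Set (Set X)) :=
    {C | (∀ V ∈ C, IsOpen V ∧ IsMeagre (M ∩ V)) ∧ C.PairwiseDisjoint id} with hP
  obtain ⟨C, hCmax⟩ : ∃ C, Maximal (· ∈ P) C := by
    apply zorn_subset
    intro c hc hchain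
    refine ⟨⋃₀ c, ⟨?_, ?_⟩, fun s hs => subset_sUnion_of_mem hs⟩
    · rintro V ⟨t, htc, hVt⟩
      exact (hc htc).1 V hVt
    · intro V hV V' hV' hne
      obtain ⟨t, htc, hVt⟩ := hV
      obtain ⟨t', htc', hVt'⟩ := hV'
      rcases hchain.total htc htc' with hsub | hsub
      · exact (hc htc').2 (hsub hVt) hVt' hne
      · exact (hc htc).2 hVt (hsub hVt') hne
  have hCP : C ∈ P := hCmax.prop
  set W : Set X := ⋃₀ C with hWdef
  have hWopen : IsOpen W := isOpen_sUnion fun V hV => (hCP.1 V hV).1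
  -- M ⊆ closure W
  have hMcl : M ⊆ closure W := by
    intro x hxM
    by_contra hxW
    obtain ⟨V, hVopen, hxV, hVmea⟩ := h x hxM
    set V' : Set X := V ∩ (closure W)ᶜ with hV'
    have hx' : x ∈ V' := ⟨hxV, hxW⟩
    have hP' : insert V' C ∈ P := by
      constructor
      · rintro U hU
        rcases hU with rfl | hU
        · exact ⟨hVopen.inter isClosed_closure.isOpen_compl,
            hVmea.mono (inter_subset_inter_right M inter_subset_left)⟩
        · exact hCP.1 U hU
      · intro U hU U' hU' hne
        rcases hU with rfl | hU <;> rcases hU' with rfl | hU'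
        · exact (hne rfl).elim
        · refine Set.disjoint_left.2 fun a ha ha' => ?_
          exact ha.2 (subset_closure (mem_sUnion.2 ⟨U', hU', ha'⟩))
        · refine Set.disjoint_left.2 fun a ha ha' => ?_
          exact ha'.2 (subset_closure (mem_sUnion.2 ⟨U, hU, ha⟩))
        · exact hCP.2 hU hU' hne
    have : V' ∈ C := hCmax.2 hP' (subset_insert _ _) (mem_insert _ _)
    exact hxW (subset_closure (mem_sUnion.2 ⟨V', this, hx'⟩))
  -- choose the nowhere dense decompositions
  have hchoice : ∀ V ∈ C, ∃ N : ℕ → Set X,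
      (∀ n, IsNowhereDense (N n) ∧ N n ⊆ V) ∧ M ∩ V ⊆ ⋃ n, N n := by
    intro V hV
    obtain ⟨S, hSnwd, hScnt, hScov⟩ :=
      isMeagre_iff_countable_union_isNowhereDense.1 (hCP.1 V hV).2
    obtain ⟨g, hg⟩ := (hScnt.insert ∅).exists_eq_range (insert_nonempty _ _)
    refine ⟨fun n => g n ∩ V, fun n => ⟨?_, inter_subset_right⟩, ?_⟩
    · show IsNowhereDense (g n ∩ V)
      have : g n ∈ insert ∅ S := hg ▸ mem_range_self n
      rcases this with hgn | hgn
      · rw [hgn]; exact isNowhereDense_mono inter_subset_left isNowhereDense_empty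
      · exact isNowhereDense_mono inter_subset_left (hSnwd _ hgn)
    · intro x hx
      obtain ⟨s, hsS, hxs⟩ := hScov hx
      have : s ∈ insert ∅ S := mem_insert_of_mem _ hsS
      rw [hg] at this
      obtain ⟨n, rfl⟩ := this
      exact mem_iUnion.2 ⟨n, (⟨hxs, hx.2⟩ : x ∈ g n ∩ V)⟩
  choose! N hN1 hN2 using hchoice
  set T : ℕ → Set X := fun n => ⋃ V ∈ C, N V n with hT
  have hTnwd : ∀ n, IsNowhereDense (T n) := by
    intro n
    rw [IsNowhereDense, eq_empty_iff_forall_notMem]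
    intro x hx
    set O := interior (closure (T n)) with hOdef
    obtain ⟨u, huO, huT⟩ : (O ∩ T n).Nonempty :=
      mem_closure_iff.1 (interior_subset hx) _ isOpen_interior hx
    obtain ⟨V, hVC, huN⟩ : ∃ V ∈ C, u ∈ N V n := by
      rw [hT] at huT; simpa using huT
    have huV : u ∈ V := (hN1 V hVC n).2 huN
    have hOV : O ∩ V ⊆ closure (N V n) := by
      intro w hw
      rw [mem_closure_iff]
      intro U hU hwU
      have hw' : w ∈ closure (T n) := interior_subset hw.1
      obtain ⟨v, hvUV, hvT⟩ : ((U ∩ V) ∩ T n).Nonempty :=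
        mem_closure_iff.1 hw' _ (hU.inter ((hCP.1 V hVC).1)) ⟨hwU, hw.2⟩
      obtain ⟨V', hV'C, hvN⟩ : ∃ V' ∈ C, v ∈ N V' n := by
        rw [hT] at hvT; simpa using hvT
      have hvV' : v ∈ V' := (hN1 V' hV'C n).2 hvN
      have : V' = V := by
        by_contra hne
        exact Set.disjoint_left.1 (hCP.2 hV'C hVC hne) hvV' hvUV.2
      exact ⟨v, hvUV.1, this ▸ hvN⟩
    have : (O ∩ V : Set X).Nonempty := ⟨u, huO, huV⟩
    obtain ⟨w, hw⟩ := this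
    have hOVopen : IsOpen (O ∩ V) := isOpen_interior.inter ((hCP.1 V hVC).1)
    have : O ∩ V ⊆ interior (closure (N V n)) := hOVopen.subset_interior_iff.2 hOV
    rw [(hN1 V hVC n).1] at this
    exact this hw
  -- conclude
  rw [isMeagre_iff_countable_union_isNowhereDense]
  refine ⟨insert (closure W \ W) (range T), ?_, ?_, ?_⟩
  · rintro t (rfl | ⟨n, rfl⟩)
    · exact nwd_closure_diff hWopen
    · exact hTnwd n
  · exact (countable_range T).insert _
  · intro x hxM
    by_cases hxW : x ∈ W
    · obtain ⟨V, hVC, hxV⟩ := mem_sUnion.1 hxW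
      obtain ⟨n, hn⟩ := mem_iUnion.1 (hN2 V hVC ⟨hxM, hxV⟩)
      refine ⟨T n, mem_insert_of_mem _ (mem_range_self n), ?_⟩
      rw [hT]
      exact mem_iUnion₂.2 ⟨V, hVC, hn⟩
    · exact ⟨closure W \ W, mem_insert _ _, hMcl hxM, hxW⟩

end BanachCategory

lemma isGδ_preimage' {X Y : Type*} [TopologicalSpace X] [TopologicalSpace Y] {g : X → Y}
    (hg : Continuous g) {s : Set Y} (hs : IsGδ s) : IsGδ (g ⁻¹' s) := by
  obtain ⟨T, hTo, hTc, rfl⟩ := hs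
  refine ⟨(g ⁻¹' ·) '' T, ?_, hTc.image _, ?_⟩
  · rintro t ⟨u, hu, rfl⟩
    exact (hTo u hu).preimage hg
  · rw [sInter_image, preimage_sInter]

lemma dense_subtype_of_dense_open {α : Type*} [TopologicalSpace α] {D T : Set α}
    (hD : IsOpen D) (hT : Dense T) : Dense (Subtype.val ⁻¹' T : Set D) := by
  rw [dense_iff_inter_open]
  rintro U hU ⟨⟨x, hxD⟩, hxU⟩
  obtain ⟨U', hU', rfl⟩ := isOpen_induced_iff.1 hU
  obtain ⟨y, hy⟩ := hT.inter_open_nonempty (U' ∩ D) (hU'.inter hD) ⟨x, hxU, hxD⟩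
  exact ⟨⟨y, hy.1.2⟩, hy.1.1, hy.2⟩

section Aux

variable {E : Type*} [AddCommGroup E] [Module ℝ E] [TopologicalSpace E]

lemma vonN_small {U : Set E} (hU : U ∈ 𝓝 (0 : E)) {B : Set E} (hB : IsVonNBounded ℝ B) :
    ∃ δ : ℝ, 0 < δ ∧ ∀ t : ℝ, |t| < δ → ∀ x ∈ B, t • x ∈ U := by
  obtain ⟨r, hr⟩ := absorbs_iff_norm.1 (hB hU)
  refine ⟨(max r 1)⁻¹, by positivity, fun t ht x hx => ?_⟩
  rcases eq_or_ne t 0 with rfl | ht0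
  · simpa using mem_of_mem_nhds hU
  · have h1 : B ⊆ (t⁻¹ • U : Set E) := by
      apply hr
      rw [norm_inv, Real.norm_eq_abs]
      have habs : (0:ℝ) < |t| := abs_pos.2 ht0
      calc r ≤ max r 1 := le_max_left _ _
        _ = ((max r 1)⁻¹)⁻¹ := (inv_inv _).symm
        _ ≤ |t|⁻¹ := by gcongr
    obtain ⟨u, huU, hu⟩ := h1 hx
    rw [← hu, smul_inv_smul₀ ht0]
    exact huU

variable [IsTopologicalAddGroup E] [ContinuousSMul ℝ E]

lemma FrechetDiffAt.congr {f g : E → ℝ} {x₀ : E} (hfg : f =ᶠ[𝓝 x₀] g)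
    (hf : FrechetDiffAt f x₀) : FrechetDiffAt g x₀ := by
  obtain ⟨L, hL⟩ := hf
  refine ⟨L, fun B hB ε hε => ?_⟩
  obtain ⟨δ₁, hδ₁, hδ₁'⟩ := hL B hB ε hε
  have hset : {x | f x = g x} ∈ 𝓝 x₀ := hfg
  have hU : {v : E | f (x₀ + v) = g (x₀ + v)} ∈ 𝓝 (0 : E) := by
    have h := (Homeomorph.addLeft x₀).continuous.tendsto (0 : E)
    simp only [Homeomorph.coe_addLeft, add_zero] at h
    exact h hset
  obtain ⟨δ₂, hδ₂, hδ₂'⟩ := vonN_small hU hB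
  refine ⟨min δ₁ δ₂, lt_min hδ₁ hδ₂, fun t ht htδ x hx => ?_⟩
  have h1 := hδ₁' t ht (lt_of_lt_of_le htδ (min_le_left _ _))
  have h2 := hδ₂' t (lt_of_lt_of_le htδ (min_le_right _ _)) x hx
  have hfx₀ : f x₀ = g x₀ := hfg.self_of_nhds
  have : f (x₀ + t • x) = g (x₀ + t • x) := h2
  rw [← this, ← hfx₀]
  exact h1 x hx

/-- A convex function bounded above on a balanced convex neighbourhood of `x₀`
is continuous at `x₀`. -/
lemma convexOn_continuousAt_of_bddAbove {F : E → ℝ} (hF : ConvexOn ℝ univ F) {x₀ : E}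
    {W : Set E} (hW : W ∈ 𝓝 (0 : E)) (hWb : Balanced ℝ W) {K : ℝ}
    (hK : ∀ w ∈ W, F (x₀ + w) ≤ K) : ContinuousAt F x₀ := by
  have h0W : (0 : E) ∈ W := mem_of_mem_nhds hW
  have hKx : F x₀ ≤ K := by simpa using hK 0 h0W
  rw [ContinuousAt, Metric.tendsto_nhds]
  intro ε hε
  set r : ℝ := min 1 ((ε / 2) / (K - F x₀ + 1)) with hr
  have hden : (0:ℝ) < K - F x₀ + 1 := by linarith
  have hrpos : 0 < r := lt_min one_pos (by positivity)
  have hr1 : r ≤ 1 := min_le_left _ _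
  have hrK : r * (K - F x₀ + 1) ≤ ε / 2 := by
    have h2 : r ≤ (ε / 2) / (K - F x₀ + 1) := min_le_right _ _
    calc r * (K - F x₀ + 1) ≤ (ε / 2) / (K - F x₀ + 1) * (K - F x₀ + 1) := by
          exact mul_le_mul_of_nonneg_right h2 hden.le
      _ = ε / 2 := by field_simp
  have key : ∀ w ∈ W, |F (x₀ + r • w) - F x₀| ≤ r * (K - F x₀ + 1) := by
    intro w hw
    have hFw : F (x₀ + w) ≤ K := hK w hw
    have hFnw : F (x₀ - w) ≤ K := by
      have hnw : -w ∈ W := by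
        have := hWb.smul_mem (a := (-1 : ℝ)) (by simp) hw
        simpa using this
      simpa [sub_eq_add_neg] using hK (-w) hnw
    have hupper : F (x₀ + r • w) ≤ (1 - r) * F x₀ + r * F (x₀ + w) := by
      have h := hF.2 (mem_univ x₀) (mem_univ (x₀ + w)) (by linarith : (0:ℝ) ≤ 1 - r)
        hrpos.le (by ring)
      have heq : (1 - r) • x₀ + r • (x₀ + w) = x₀ + r • w := by
        rw [smul_add]; module
      rw [heq] at h
      simpa [smul_eq_mul] using h
    have h1r : (0:ℝ) < 1 + r := by linarith
    have hlower : F x₀ ≤ (1 / (1 + r)) * F (x₀ + r • w) + (r / (1 + r)) * F (x₀ - w) := by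
      have h := hF.2 (mem_univ (x₀ + r • w)) (mem_univ (x₀ - w))
        (by positivity : (0:ℝ) ≤ 1 / (1 + r)) (by positivity : (0:ℝ) ≤ r / (1 + r))
        (by field_simp)
      have heq : (1 / (1 + r)) • (x₀ + r • w) + (r / (1 + r)) • (x₀ - w) = x₀ := by
        match_scalars <;> field_simp <;> ring
      rw [heq] at h
      simpa [smul_eq_mul] using h
    rw [abs_le]
    constructor
    · -- lower bound : -(r * (...)) ≤ F (x₀ + r•w) - F x₀
      have h2 : (1 + r) * F x₀ ≤ F (x₀ + r • w) + r * F (x₀ - w) := by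
        have := mul_le_mul_of_nonneg_left hlower h1r.le
        calc (1 + r) * F x₀ ≤ (1 + r) * ((1 / (1 + r)) * F (x₀ + r • w)
              + (r / (1 + r)) * F (x₀ - w)) := this
          _ = F (x₀ + r • w) + r * F (x₀ - w) := by field_simp
      nlinarith [mul_le_mul_of_nonneg_left hFnw hrpos.le]
    · nlinarith [mul_le_mul_of_nonneg_left hFw hrpos.le]
  have hnb : {x : E | x - x₀ ∈ r • W} ∈ 𝓝 x₀ := by
    have hc : Continuous fun x : E => x - x₀ := continuous_id.sub continuous_const
    have ht := hc.tendsto x₀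
    rw [sub_self] at ht
    exact ht ((set_smul_mem_nhds_zero_iff hrpos.ne').2 hW)
  refine Filter.mem_of_superset hnb ?_
  rintro x hx
  obtain ⟨w, hwW, hww⟩ := hx
  have hxeq : x = x₀ + r • w := by
    have : x - x₀ = r • w := hww.symm
    linear_combination (norm := module) this
  rw [Set.mem_setOf_eq, hxeq, Real.dist_eq]
  calc |F (x₀ + r • w) - F x₀| ≤ r * (K - F x₀ + 1) := key w hwW
    _ ≤ ε / 2 := hrK
    _ < ε := by linarith

/-- Existence of a (not necessarily continuous) subgradient of a convex function at an
interior point of its domain. -/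
lemma exists_subgradient {D : Set E} {f : E → ℝ} (hD : IsOpen D) (hf : ConvexOn ℝ D f)
    {y : E} (hy : y ∈ D) : ∃ ℓ : E →ₗ[ℝ] ℝ, ∀ x ∈ D, ℓ (x - y) ≤ f x - f y := by
  classical
  set slope : E → ℝ → ℝ := fun h t => (f (y + t • h) - f y) / t with hslope
  set T : E → Set ℝ := fun h => {t : ℝ | 0 < t ∧ y + t • h ∈ D} with hT
  set Q : E → Set ℝ := fun h => slope h '' T h with hQ
  set q : E → ℝ := fun h => sInf (Q h) with hq
  -- T h is nonempty
  have hTne : ∀ h : E, (T h).Nonempty := by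
    intro h
    have hcont : Continuous fun t : ℝ => y + t • h :=
      continuous_const.add (continuous_id.smul continuous_const)
    have htend := hcont.tendsto 0
    rw [show y + (0:ℝ) • h = y by simp] at htend
    have hP : {t : ℝ | y + t • h ∈ D} ∈ 𝓝 (0:ℝ) := htend (hD.mem_nhds hy)
    obtain ⟨ε, hε, hball⟩ := Metric.mem_nhds_iff.1 hP
    refine ⟨ε / 2, by positivity, hball ?_⟩
    rw [Metric.mem_ball, Real.dist_eq, sub_zero, abs_of_pos (by positivity : (0:ℝ) < ε/2)]
    linarith
  have hQne : ∀ h : E, (Q h).Nonempty := fun h => (hTne h).image _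
  -- fundamental slope comparison
  have hcomp : ∀ h : E, ∀ s ∈ T (-h), ∀ t ∈ T h, - slope (-h) s ≤ slope h t := by
    intro h s hs t ht
    obtain ⟨hs0, hsD⟩ := hs
    obtain ⟨ht0, htD⟩ := ht
    have hst : (0:ℝ) < s + t := by linarith
    have hyeq : (s / (s + t)) • (y + t • h) + (t / (s + t)) • (y + s • (-h)) = y := by
      match_scalars <;> field_simp <;> ring
    have hconv := hf.2 htD hsD (by positivity : (0:ℝ) ≤ s / (s+t))
      (by positivity : (0:ℝ) ≤ t / (s+t)) (by field_simp)
    rw [hyeq] at hconv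
    simp only [smul_eq_mul] at hconv
    have hmul := mul_le_mul_of_nonneg_left hconv hst.le
    have hexp : (s + t) * (s / (s + t) * f (y + t • h) + t / (s + t) * f (y + s • (-h)))
        = s * f (y + t • h) + t * f (y + s • (-h)) := by field_simp
    rw [hexp] at hmul
    have hBC : (f y - f (y + s • (-h))) / s ≤ (f (y + t • h) - f y) / t := by
      rw [div_le_div_iff₀ hs0 ht0]
      nlinarith
    calc - slope (-h) s = (f y - f (y + s • (-h))) / s := by
          simp only [hslope]; ring
      _ ≤ (f (y + t • h) - f y) / t := hBC
      _ = slope h t := by simp only [hslope]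
  -- Q h is bounded below
  have hbdd : ∀ h : E, BddBelow (Q h) := by
    intro h
    obtain ⟨s, hs⟩ := hTne (-h)
    refine ⟨- slope (-h) s, ?_⟩
    rintro r ⟨t, ht, rfl⟩
    exact hcomp h s hs t ht
  -- q is nonnegative at 0
  have hq0 : 0 ≤ q 0 := by
    refine le_csInf (hQne 0) ?_
    rintro r ⟨t, ht, rfl⟩
    simp [hslope]
  -- positive homogeneity
  have hhom : ∀ c : ℝ, 0 < c → ∀ h : E, q (c • h) = c * q h := by
    intro c hc h
    have himg : Q (c • h) = c • Q h := by
      ext r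
      constructor
      · rintro ⟨t, ⟨ht0, htD⟩, rfl⟩
        refine ⟨slope h (t * c), ⟨t * c, ⟨by positivity, ?_⟩, rfl⟩, ?_⟩
        · rw [mul_smul]; exact htD
        · show c • slope h (t * c) = slope (c • h) t
          simp only [hslope, smul_eq_mul, smul_smul]
          field_simp [ht0.ne', hc.ne']
      · rintro ⟨r', ⟨t, ⟨ht0, htD⟩, rfl⟩, rfl⟩
        refine ⟨t / c, ⟨by positivity, ?_⟩, ?_⟩
        · rw [smul_smul, div_mul_cancel₀ _ hc.ne']
          exact htD
        · show slope (c • h) (t / c) = c • slope h t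
          simp only [hslope, smul_eq_mul, smul_smul, div_mul_cancel₀ _ hc.ne']
          field_simp [ht0.ne', hc.ne']
    rw [hq]
    simp only []
    rw [himg, Real.sInf_smul_of_nonneg hc.le, smul_eq_mul]
  -- subadditivity
  have hadd : ∀ h₁ h₂ : E, q (h₁ + h₂) ≤ q h₁ + q h₂ := by
    intro h₁ h₂
    have key : ∀ t₁ ∈ T h₁, ∀ t₂ ∈ T h₂, q (h₁ + h₂) ≤ slope h₁ t₁ + slope h₂ t₂ := by
      rintro t₁ ⟨ht₁, hD₁⟩ t₂ ⟨ht₂, hD₂⟩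
      have hst : (0:ℝ) < t₁ + t₂ := by linarith
      have hst' : t₁ + t₂ ≠ 0 := hst.ne'
      have hst'' : t₂ + t₁ ≠ 0 := by rw [add_comm]; exact hst'
      set t : ℝ := t₁ * t₂ / (t₁ + t₂) with htdef
      have ht0 : 0 < t := by positivity
      have hyeq : (t₂ / (t₁ + t₂)) • (y + t₁ • h₁) + (t₁ / (t₁ + t₂)) • (y + t₂ • h₂)
          = y + t • (h₁ + h₂) := by
        rw [htdef]
        match_scalars <;> field_simp [htdef] <;> ring
      have hconv := hf.2 hD₁ hD₂ (by positivity : (0:ℝ) ≤ t₂ / (t₁+t₂))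
        (by positivity : (0:ℝ) ≤ t₁ / (t₁+t₂)) (by field_simp; ring)
      rw [hyeq] at hconv
      simp only [smul_eq_mul] at hconv
      have htD : t ∈ T (h₁ + h₂) := by
        refine ⟨ht0, ?_⟩
        rw [← hyeq]
        exact hf.1 hD₁ hD₂ (by positivity) (by positivity) (by field_simp; ring)
      have hle : q (h₁ + h₂) ≤ slope (h₁ + h₂) t := csInf_le (hbdd _) ⟨t, htD, rfl⟩
      refine hle.trans ?_
      simp only [hslope]
      have heq : (slope h₁ t₁ + slope h₂ t₂) * t
          = t₂ / (t₁ + t₂) * f (y + t₁ • h₁) + t₁ / (t₁ + t₂) * f (y + t₂ • h₂) - f y := by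
        simp only [hslope]
        rw [htdef]
        field_simp [htdef]
        ring
      rw [div_le_iff₀ ht0, heq]
      linarith
    have step1 : ∀ r₁ ∈ Q h₁, q (h₁ + h₂) ≤ r₁ + q h₂ := by
      rintro r₁ ⟨t₁, ht₁, rfl⟩
      have : ∀ r₂ ∈ Q h₂, q (h₁ + h₂) - slope h₁ t₁ ≤ r₂ := by
        rintro r₂ ⟨t₂, ht₂, rfl⟩
        linarith [key t₁ ht₁ t₂ ht₂]
      linarith [le_csInf (hQne h₂) this]
    have : ∀ r₁ ∈ Q h₁, q (h₁ + h₂) - q h₂ ≤ r₁ := fun r₁ hr₁ => by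
      linarith [step1 r₁ hr₁]
    linarith [le_csInf (hQne h₁) this]
  -- Hahn–Banach extension from the trivial subspace
  have hbot : ∀ x : (⊥ : E →ₗ.[ℝ] ℝ).domain, (⊥ : E →ₗ.[ℝ] ℝ) x ≤ q (x : E) := by
    intro x
    have hx0 : (x : E) = 0 := by
      have h2 : (x : E) ∈ (⊥ : Submodule ℝ E) := x.2
      exact (Submodule.mem_bot ℝ).1 h2
    have hb0 : (⊥ : E →ₗ.[ℝ] ℝ) x = 0 := rfl
    rw [hb0, hx0]
    exact hq0
  obtain ⟨g, -, hg⟩ := exists_extension_of_le_sublinear (⊥ : E →ₗ.[ℝ] ℝ) q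
    (fun c hc x => hhom c hc x) hadd hbot
  · refine ⟨g, fun x hx => ?_⟩
    have h1 : (1:ℝ) ∈ T (x - y) := by
      refine ⟨one_pos, ?_⟩
      rw [one_smul, add_sub_cancel]
      exact hx
    have h2 : q (x - y) ≤ slope (x - y) 1 := csInf_le (hbdd _) ⟨1, h1, rfl⟩
    have h3 : slope (x - y) 1 = f x - f y := by
      simp [hslope]
    exact (hg (x - y)).trans (h2.trans_eq h3)

/-- A continuous convex function on an open convex set agrees, near any point of its
domain, with a globally-defined continuous convex function. -/
lemma exists_local_extension [LocallyConvexSpace ℝ E] {D : Set E} {f : E → ℝ}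
    (hD : IsOpen D) (hf : ConvexOn ℝ D f) (hfc : ContinuousOn f D) {z : E} (hz : z ∈ D) :
    ∃ (F : E → ℝ) (V : Set E), Continuous F ∧ ConvexOn ℝ univ F ∧ IsOpen V ∧ z ∈ V ∧
      V ⊆ D ∧ ∀ x ∈ V, F x = f x := by
  classical
  have hcz : ContinuousAt f z := hfc.continuousAt (hD.mem_nhds hz)
  have hU0 : {x : E | |f x - f z| < 1} ∈ 𝓝 z := by
    have h1 := hcz (Metric.ball_mem_nhds (f z) one_pos)
    refine Filter.mem_of_superset h1 ?_
    intro x hx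
    simpa [Real.dist_eq] using hx
  set U : Set E := {x : E | |f x - f z| < 1} ∩ D with hU
  have hUnhds : U ∈ 𝓝 z := inter_mem hU0 (hD.mem_nhds hz)
  have hU0' : {w : E | z + w ∈ U} ∈ 𝓝 (0 : E) := by
    have h := (Homeomorph.addLeft z).continuous.tendsto (0 : E)
    simp only [Homeomorph.coe_addLeft, add_zero] at h
    exact h hUnhds
  obtain ⟨W, ⟨hW0, hWo, hWb, hWc⟩, hWsub⟩ :=
    (nhds_hasBasis_absConvex_open ℝ E).mem_iff.1 hU0'
  set p : E → ℝ := gauge W with hp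
  have habs : Absorbent ℝ W := absorbent_nhds_zero (hWo.mem_nhds hW0)
  have hWU : ∀ w ∈ W, z + w ∈ U := fun w hw => hWsub hw
  have hpW : ∀ w : E, p w < 1 → w ∈ W := fun w hw =>
    gauge_lt_one_subset_self hWc hW0 habs hw
  have hpadd : ∀ a b : E, p (a + b) ≤ p a + p b := fun a b => gauge_add_le hWc habs a b
  have hpsmul : ∀ c : ℝ, 0 ≤ c → ∀ w : E, p (c • w) = c * p w := fun c hc w =>
    gauge_smul_of_nonneg hc w
  have hpneg : ∀ w : E, p (-w) = p w := by
    intro w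
    rw [show -w = (-1 : ℝ) • w by simp, hp, gauge_smul hWb]
    simp
  have hp0 : ∀ w : E, 0 ≤ p w := fun w => gauge_nonneg w
  have hpzero : p 0 = 0 := gauge_zero
  have hpone : ∀ w ∈ W, p w ≤ 1 := fun w hw => gauge_le_one_of_mem hw
  set S : Set E := {y : E | p (y - z) ≤ 1 / 2} with hS
  have hSU : S ⊆ U := by
    intro y hy
    have h1 : y - z ∈ W := hpW _ (lt_of_le_of_lt hy (by norm_num))
    have h2 := hWU _ h1
    simpa using h2
  have hSD : S ⊆ D := fun y hy => (hSU hy).2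
  have hfS : ∀ y ∈ S, |f y - f z| < 1 := fun y hy => (hSU hy).1
  have hzS : z ∈ S := by
    show p (z - z) ≤ 1 / 2
    rw [sub_self, hpzero]; norm_num
  -- subgradients at points of S
  have hsub : ∀ y : E, ∃ ℓ : E →ₗ[ℝ] ℝ, y ∈ S → ∀ x ∈ D, ℓ (x - y) ≤ f x - f y := by
    intro y
    by_cases hy : y ∈ S
    · obtain ⟨ℓ, hℓ⟩ := exists_subgradient hD hf (hSD hy)
      exact ⟨ℓ, fun _ => hℓ⟩
    · exact ⟨0, fun h => absurd h hy⟩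
  choose ℓ hℓ using hsub
  -- uniform bound on the subgradients
  have hbound : ∀ y ∈ S, ∀ h : E, ℓ y h ≤ 4 * p h + 2 := by
    intro y hyS h
    have hsmall : ∀ h' : E, p h' < 1 / 2 → ℓ y h' ≤ 2 := by
      intro h' hp'
      have hyU : y + h' ∈ U := by
        have h1 : p (y + h' - z) < 1 := by
          have h2 : y + h' - z = y - z + h' := by abel
          have h3 : p (y - z + h') ≤ p (y - z) + p h' := hpadd _ _
          have h4 : p (y - z) ≤ 1 / 2 := hyS
          rw [h2]; linarith
        have h5 := hWU _ (hpW _ h1)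
        simpa using h5
      have h6 := hℓ y hyS (y + h') hyU.2
      rw [add_sub_cancel_left] at h6
      have hb1 := abs_lt.1 (show |f (y + h') - f z| < 1 from hyU.1)
      have hb2 := abs_lt.1 (hfS y hyS)
      linarith
    set c : ℝ := (2 * p h + 1)⁻¹ with hc
    have hden : (0:ℝ) < 2 * p h + 1 := by have := hp0 h; linarith
    have hc0 : 0 < c := by rw [hc]; positivity
    have hpch : p (c • h) < 1 / 2 := by
      rw [hpsmul c hc0.le h, hc]
      rw [inv_mul_eq_div, div_lt_iff₀ hden]
      have := hp0 h; linarith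
    have h7 := hsmall (c • h) hpch
    rw [map_smul, smul_eq_mul] at h7
    have h8 : ℓ y h ≤ 2 / c := by
      rw [le_div_iff₀ hc0, mul_comm]
      exact h7
    have h9 : (2:ℝ) / c = 4 * p h + 2 := by
      rw [hc, div_eq_mul_inv, inv_inv]; ring
    linarith [h8, h9.le]
  -- the extension
  set F : E → ℝ := fun x => sSup ((fun y => f y + ℓ y (x - y)) '' S) with hF
  have hne : ∀ x : E, ((fun y => f y + ℓ y (x - y)) '' S).Nonempty :=
    fun x => ⟨_, ⟨z, hzS, rfl⟩⟩
  have hub : ∀ x : E, ∀ r ∈ (fun y => f y + ℓ y (x - y)) '' S, r ≤ f z + 5 + 4 * p (x - z) := by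
    rintro x r ⟨y, hyS, rfl⟩
    have h1 : f y ≤ f z + 1 := by have := abs_lt.1 (hfS y hyS); linarith
    have h2 : ℓ y (x - y) ≤ 4 * p (x - y) + 2 := hbound y hyS (x - y)
    have h3 : p (x - y) ≤ p (x - z) + p (y - z) := by
      have h4 : x - y = (x - z) + -(y - z) := by abel
      rw [h4]
      calc p ((x - z) + -(y - z)) ≤ p (x - z) + p (-(y - z)) := hpadd _ _
        _ = p (x - z) + p (y - z) := by rw [hpneg]
    have h5 : p (y - z) ≤ 1 / 2 := hyS
    simp only []
    linarith
  have hbdd : ∀ x : E, BddAbove ((fun y => f y + ℓ y (x - y)) '' S) :=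
    fun x => ⟨f z + 5 + 4 * p (x - z), fun r hr => hub x r hr⟩
  have hFle : ∀ x : E, F x ≤ f z + 5 + 4 * p (x - z) :=
    fun x => csSup_le (hne x) (hub x)
  have hFf : ∀ x ∈ S, F x = f x := by
    intro x hxS
    refine le_antisymm ?_ ?_
    · refine csSup_le (hne x) ?_
      rintro r ⟨y, hyS, rfl⟩
      have := hℓ y hyS x (hSD hxS)
      simp only []
      linarith
    · refine le_csSup (hbdd x) ?_
      refine ⟨x, hxS, ?_⟩
      simp
  have hFconv : ConvexOn ℝ univ F := by
    refine ⟨convex_univ, ?_⟩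
    intro x hx x' hx' a b ha hb hab
    refine csSup_le (hne _) ?_
    rintro r ⟨y, hyS, rfl⟩
    have heq : a • (x - y) + b • (x' - y) = a • x + b • x' - (a + b) • y := by module
    rw [hab, one_smul] at heq
    have hdecomp : f y + ℓ y (a • x + b • x' - y)
        = a * (f y + ℓ y (x - y)) + b * (f y + ℓ y (x' - y)) := by
      rw [← heq, map_add, map_smul, map_smul, smul_eq_mul, smul_eq_mul]
      have : f y = a * f y + b * f y := by rw [← add_mul, hab, one_mul]
      linarith [this]
    beta_reduce
    rw [hdecomp]
    have hx1 : f y + ℓ y (x - y) ≤ F x := le_csSup (hbdd x) ⟨y, hyS, rfl⟩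
    have hx2 : f y + ℓ y (x' - y) ≤ F x' := le_csSup (hbdd x') ⟨y, hyS, rfl⟩
    have := add_le_add (mul_le_mul_of_nonneg_left hx1 ha) (mul_le_mul_of_nonneg_left hx2 hb)
    simpa [smul_eq_mul] using this
  have hFcont : Continuous F := by
    rw [continuous_iff_continuousAt]
    intro x₀
    refine convexOn_continuousAt_of_bddAbove hFconv (hWo.mem_nhds hW0) hWb
      (K := f z + 9 + 4 * p (x₀ - z)) ?_
    intro w hw
    have h1 : p (x₀ + w - z) ≤ p (x₀ - z) + p w := by
      have h2 : x₀ + w - z = (x₀ - z) + w := by abel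
      rw [h2]; exact hpadd _ _
    have h3 := hFle (x₀ + w)
    have h4 := hpone w hw
    linarith
  -- the neighbourhood V
  refine ⟨F, (fun w => z + w) '' ((2:ℝ)⁻¹ • W), hFcont, hFconv, ?_, ?_, ?_, ?_⟩
  · exact (Homeomorph.addLeft z).isOpenMap _ (hWo.smul₀ (by norm_num))
  · exact ⟨0, ⟨0, hW0, smul_zero _⟩, add_zero z⟩
  · rintro x ⟨w, ⟨w', hw', rfl⟩, rfl⟩
    refine hSD ?_
    show p (z + (2:ℝ)⁻¹ • w' - z) ≤ 1 / 2
    rw [add_sub_cancel_left, hpsmul _ (by norm_num)]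
    have := hpone w' hw'
    rw [inv_eq_one_div]
    linarith
  · rintro x ⟨w, ⟨w', hw', rfl⟩, rfl⟩
    refine hFf _ ?_
    show p (z + (2:ℝ)⁻¹ • w' - z) ≤ 1 / 2
    rw [add_sub_cancel_left, hpsmul _ (by norm_num)]
    have := hpone w' hw'
    rw [inv_eq_one_div]
    linarith

end Aux

/-- A Baire real locally convex space `E` is Asplund if and only if every continuous convex
function `f : E → ℝ` defined on all of `E` is Fréchet differentiable at every point of some
dense `Gδ` subset of `E`. -/
theorem isAsplund_iff_global_convex_frechet (E : Type*) [AddCommGroup E] [Module ℝ E] [TopologicalSpace E]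
    [IsTopologicalAddGroup E] [ContinuousSMul ℝ E] [LocallyConvexSpace ℝ E] [T2Space E]
    [BaireSpace E] :
    IsAsplund E ↔ ∀ f : E → ℝ, Continuous f → ConvexOn ℝ Set.univ f →
      ∃ G : Set E, IsGδ G ∧ Dense G ∧ ∀ x ∈ G, FrechetDiffAt f x := by
  constructor
  · intro hA f hf hconv
    obtain ⟨G, hGsub, hGd, hGdense, hGdiff⟩ := hA Set.univ f ⟨0, trivial⟩ isOpen_univ
      convex_univ hf.continuousOn hconv
    have he : Continuous (fun x : E => (⟨x, trivial⟩ : (Set.univ : Set E))) :=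
      Continuous.subtype_mk continuous_id _
    refine ⟨G, ?_, ?_, hGdiff⟩
    · have hGeq : G = (fun x : E => (⟨x, trivial⟩ : (Set.univ : Set E))) ⁻¹'
          (Subtype.val ⁻¹' G) := by ext x; simp
      rw [hGeq]
      exact isGδ_preimage' he hGd
    · rw [dense_iff_inter_open]
      rintro U hU ⟨x, hx⟩
      have h1 : (Subtype.val ⁻¹' U : Set (Set.univ : Set E)).Nonempty := ⟨⟨x, trivial⟩, hx⟩
      have h2 : IsOpen (Subtype.val ⁻¹' U : Set (Set.univ : Set E)) :=
        hU.preimage continuous_subtype_val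
      obtain ⟨⟨y, hyt⟩, hyU, hyG⟩ := hGdense.inter_open_nonempty _ h2 h1
      exact ⟨y, hyU, hyG⟩
  · intro H D f hne hDo hDc hfc hfcv
    set A : Set E := {x | FrechetDiffAt f x} with hA
    have hM : ∀ x ∈ D \ A, ∃ V : Set E, IsOpen V ∧ x ∈ V ∧ IsMeagre ((D \ A) ∩ V) := by
      intro x hx
      obtain ⟨F, V, hFc, hFconv, hVo, hxV, hVD, hFV⟩ :=
        exists_local_extension hDo hfcv hfc hx.1
      obtain ⟨G, hGd, hGdense, hGdiff⟩ := H F hFc hFconv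
      refine ⟨V, hVo, hxV, ?_⟩
      have hsub : (D \ A) ∩ V ⊆ Gᶜ := by
        intro u hu huG
        apply hu.1.2
        have hev : F =ᶠ[𝓝 u] f := eventually_of_mem (hVo.mem_nhds hu.2) hFV
        exact FrechetDiffAt.congr hev (hGdiff u huG)
      have hGmeagre : IsMeagre Gᶜ := by
        rw [IsMeagre, compl_compl]
        exact residual_of_dense_Gδ hGd hGdense
      exact hGmeagre.mono hsub
    have hMeagre : IsMeagre (D \ A) := banach_category hM
    rw [IsMeagre] at hMeagre
    obtain ⟨T, hTsub, hTd, hTdense⟩ := mem_residual.1 hMeagre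
    have hpre : (Subtype.val ⁻¹' (D ∩ T) : Set D) = Subtype.val ⁻¹' T := by
      ext x; simp [x.2]
    refine ⟨D ∩ T, Set.inter_subset_left, ?_, ?_, ?_⟩
    · rw [hpre]
      exact isGδ_preimage' continuous_subtype_val hTd
    · rw [hpre]
      exact dense_subtype_of_dense_open hDo hTdense
    · rintro x ⟨hxD, hxT⟩
      have hx' := hTsub hxT
      by_contra hnd
      exact hx' ⟨hxD, hnd⟩
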